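/- Let g : ℝ → ℝ be r-times differentiable with r-th derivative g_r ∈ L^p(ℝ) for some 1 ≤ p < ∞. Then for every t ∈ ℝ, ‖g(· + t) - g - Σ_{i=1}^r (tⁱ/i!) g_i‖_p ≤ (|t|^r / r!) · w_{p, g_r}(|t|), where g_i denotes the i-th derivative of g and w_{p, g_r} is the L^p modulus of continuity of g_r. -/

import Mathlib

open MeasureTheory
open scoped ENNReal

/-- Hölder/Jensen step. -/
lemma jensen_rpow_aux {ν : Measure ℝ} (w H : ℝ → ℝ≥0∞) (hw : AEMeasurable w ν)
    (hH : AEMeasurable H ν) {P : ℝ} (hP : 1 ≤ P) :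
    (∫⁻ s, w s * H s ∂ν) ^ P ≤ (∫⁻ s, w s ∂ν) ^ (P - 1) * ∫⁻ s, w s * H s ^ P ∂ν := by
  rcases eq_or_lt_of_le hP with h1 | h1
  · subst h1; simp
  · have hpq : P.HolderConjugate P.conjExponent := Real.HolderConjugate.conjExponent h1
    set Q := P.conjExponent with hQ
    have hP0 : P ≠ 0 := hpq.pos.ne'
    have hQ0 : Q ≠ 0 := hpq.symm.pos.ne'
    have key : ∫⁻ s, w s * H s ∂ν ≤
        (∫⁻ s, w s * H s ^ P ∂ν) ^ (1 / P) * (∫⁻ s, w s ∂ν) ^ (1 / Q) := by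
      have h := ENNReal.lintegral_mul_le_Lp_mul_Lq ν hpq
        (f := fun s => w s ^ (1 / P) * H s) (g := fun s => w s ^ (1 / Q))
        ((hw.pow_const _).mul hH) (hw.pow_const _)
      calc ∫⁻ s, w s * H s ∂ν
          = ∫⁻ s, ((fun s => w s ^ (1/P) * H s) * fun s => w s ^ (1/Q)) s ∂ν := by
            congr 1; funext s
            simp only [Pi.mul_apply]
            rw [mul_right_comm, ← ENNReal.rpow_add_of_nonneg _ _
                (le_of_lt (by simpa using hpq.pos)) (le_of_lt (by simpa using hpq.symm.pos)),
              show (1:ℝ)/P + 1/Q = 1 by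
                rw [one_div, one_div]; exact hpq.inv_add_inv_eq_one,
              ENNReal.rpow_one]
        _ ≤ (∫⁻ s, (w s ^ (1/P) * H s) ^ P ∂ν) ^ (1/P) * (∫⁻ s, (w s ^ (1/Q)) ^ Q ∂ν) ^ (1/Q) := h
        _ = (∫⁻ s, w s * H s ^ P ∂ν) ^ (1 / P) * (∫⁻ s, w s ∂ν) ^ (1 / Q) := by
            congr 1
            · congr 1; apply lintegral_congr fun s => ?_
              rw [ENNReal.mul_rpow_of_nonneg _ _ (by positivity), ← ENNReal.rpow_mul,
                one_div_mul_cancel hP0, ENNReal.rpow_one]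
            · congr 1; apply lintegral_congr fun s => ?_
              rw [← ENNReal.rpow_mul, one_div_mul_cancel hQ0, ENNReal.rpow_one]
    calc (∫⁻ s, w s * H s ∂ν) ^ P
        ≤ ((∫⁻ s, w s * H s ^ P ∂ν) ^ (1 / P) * (∫⁻ s, w s ∂ν) ^ (1 / Q)) ^ P :=
          ENNReal.rpow_le_rpow key (by positivity)
      _ = (∫⁻ s, w s ∂ν) ^ (P - 1) * ∫⁻ s, w s * H s ^ P ∂ν := by
          rw [ENNReal.mul_rpow_of_nonneg _ _ (by positivity), ← ENNReal.rpow_mul,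
            ← ENNReal.rpow_mul, one_div_mul_cancel hP0, ENNReal.rpow_one, mul_comm]
          congr 2
          have hinv : Q⁻¹ = 1 - P⁻¹ := by have := hpq.inv_add_inv_eq_one; linarith
          rw [one_div, hinv, sub_mul, one_mul, inv_mul_cancel₀ hP0]

lemma int_pow_aux (r : ℕ) (hr : 1 ≤ r) (a : ℝ) :
    ∫ s in (0:ℝ)..1, a * (1 - s) ^ (r - 1) / (Nat.factorial (r-1) : ℝ)
      = a / (Nat.factorial r : ℝ) := by
  have h1 : ∫ s in (0:ℝ)..1, (1 - s) ^ (r - 1) = 1 / r := by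
    rw [show (fun s : ℝ => (1 - s) ^ (r-1)) = fun s : ℝ => (fun u : ℝ => u ^ (r-1)) (1 - s) from rfl,
      intervalIntegral.integral_comp_sub_left (fun u : ℝ => u ^ (r-1)) 1]
    norm_num [integral_pow]
    rw [Nat.cast_sub hr]
    push_cast; ring
  have : (fun s : ℝ => a * (1 - s) ^ (r - 1) / (Nat.factorial (r-1) : ℝ))
      = fun s : ℝ => (a / (Nat.factorial (r-1) : ℝ)) * (1 - s) ^ (r - 1) := by
    funext s; ring
  rw [this, intervalIntegral.integral_const_mul, h1]
  rw [div_mul_eq_mul_div, mul_one_div, div_div, ← Nat.cast_mul,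
    Nat.mul_factorial_pred (by omega)]

lemma taylor_aux (r : ℕ) (hr : 1 ≤ r) (g : ℝ → ℝ)
    (hdiff : ∀ i < r, Differentiable ℝ (iteratedDeriv i g))
    (hloc : LocallyIntegrable (iteratedDeriv r g) volume)
    (t : ℝ) (ht : t ≠ 0) (x : ℝ) :
    g (x + t) - g x - ∑ i ∈ Finset.Icc 1 r, t ^ i / (Nat.factorial i : ℝ) * iteratedDeriv i g x
      = ∫ s in (0:ℝ)..1, (t ^ r * (1 - s) ^ (r - 1) / (Nat.factorial (r-1) : ℝ)) *
          (iteratedDeriv r g (x + s * t) - iteratedDeriv r g x) := by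
  set G := iteratedDeriv r g with hG
  have hGint : IntervalIntegrable (fun s => G (x + s * t)) volume 0 1 := by
    have h0 : ∀ a b : ℝ, IntervalIntegrable G volume a b := fun a b =>
      intervalIntegrable_iff.2 ((hloc.integrableOn_isCompact isCompact_uIcc).mono_set
        Set.uIoc_subset_uIcc)
    have h1 := ((h0 x (x + t)).comp_add_left x).comp_mul_right (c := t)
    simpa [sub_self, add_sub_cancel_left, div_self ht, zero_div] using h1
  have hDint : IntervalIntegrable
      (fun s => (t ^ r * (1 - s) ^ (r - 1) / (Nat.factorial (r-1) : ℝ)) * G (x + s * t))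
      volume 0 1 :=
    hGint.continuousOn_mul (by fun_prop)
  set h : ℝ → ℝ := fun s => ∑ i ∈ Finset.range r,
    (1 - s) ^ i * (t ^ i / (Nat.factorial i : ℝ)) * iteratedDeriv i g (x + s * t) with hh
  have hderiv : ∀ s : ℝ, HasDerivAt h
      ((t ^ r * (1 - s) ^ (r - 1) / (Nat.factorial (r-1) : ℝ)) * G (x + s * t)) s := by
    intro s
    have hsum : HasDerivAt h (∑ i ∈ Finset.range r,
        ((↑i * (1 - s) ^ (i - 1) * -1) * (t ^ i / (Nat.factorial i : ℝ))
            * iteratedDeriv i g (x + s * t)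
          + (1 - s) ^ i * (t ^ i / (Nat.factorial i : ℝ))
            * (iteratedDeriv (i+1) g (x + s * t) * t))) s := by
      apply HasDerivAt.fun_sum
      intro i hi
      have hu : HasDerivAt (fun s : ℝ => (1 - s) ^ i * (t ^ i / (Nat.factorial i : ℝ)))
          ((↑i * (1 - s) ^ (i - 1) * -1) * (t ^ i / (Nat.factorial i : ℝ))) s :=
        (((hasDerivAt_id s).const_sub 1).pow i).mul_const _
      have hinner : HasDerivAt (fun s : ℝ => x + s * t) t s := by
        simpa using (hasDerivAt_mul_const (x := s) t).const_add x
      have houter : HasDerivAt (iteratedDeriv i g) (iteratedDeriv (i+1) g (x + s * t))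
          (x + s * t) := by
        rw [iteratedDeriv_succ]
        exact ((hdiff i (Finset.mem_range.1 hi)) (x + s * t)).hasDerivAt
      exact hu.mul (houter.comp s hinner : HasDerivAt (iteratedDeriv i g ∘ fun s => x + s * t) _ s)
    convert hsum using 1
    set A : ℕ → ℝ := fun j => if j = 0 then 0 else
      (1 - s) ^ (j - 1) * (t ^ j / (Nat.factorial (j-1) : ℝ)) * iteratedDeriv j g (x + s * t)
      with hA
    have hterm : ∀ i ∈ Finset.range r,
        ((↑i * (1 - s) ^ (i - 1) * -1) * (t ^ i / (Nat.factorial i : ℝ))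
            * iteratedDeriv i g (x + s * t)
          + (1 - s) ^ i * (t ^ i / (Nat.factorial i : ℝ))
            * (iteratedDeriv (i+1) g (x + s * t) * t)) = A (i+1) - A i := by
      intro i _
      cases i with
      | zero =>
        simp [hA, Nat.factorial]
        ring
      | succ k =>
        simp only [hA, if_neg (Nat.succ_ne_zero _), Nat.add_sub_cancel]
        have hk : (Nat.factorial (k+1) : ℝ) = (k+1) * Nat.factorial k := by
          push_cast [Nat.factorial_succ]; ring
        have hkne : (Nat.factorial k : ℝ) ≠ 0 := Nat.cast_ne_zero.2 (Nat.factorial_ne_zero k)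
        push_cast [hk]
        field_simp
        ring
    rw [Finset.sum_congr rfl hterm, Finset.sum_range_sub A]
    have hA0 : A 0 = 0 := by simp [hA]
    rw [hA0, sub_zero, hA]
    simp only [if_neg (by omega : r ≠ 0)]
    rw [hG]; ring
  have hFTC := intervalIntegral.integral_eq_sub_of_hasDerivAt
    (f := h) (a := 0) (b := 1) (fun s _ => hderiv s) hDint
  have h1val : h 1 = g (x + t) := by
    simp only [hh]
    rw [Finset.sum_eq_single 0]
    · simp
    · intro i _ hi0; simp [zero_pow hi0]
    · intro habs; exact absurd (Finset.mem_range.2 (by omega)) habs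
  have h0val : h 0 = ∑ i ∈ Finset.range r, t ^ i / (Nat.factorial i : ℝ)
      * iteratedDeriv i g x := by
    simp [hh, mul_comm]
  have hIcc : ∑ i ∈ Finset.Icc 1 r, t ^ i / (Nat.factorial i : ℝ) * iteratedDeriv i g x
      = (∑ i ∈ Finset.range r, t ^ i / (Nat.factorial i : ℝ) * iteratedDeriv i g x)
        + t ^ r / (Nat.factorial r : ℝ) * G x - g x := by
    have e1 : ∑ i ∈ Finset.Icc 1 r, t ^ i / (Nat.factorial i : ℝ) * iteratedDeriv i g x
        = ∑ i ∈ Finset.range r, t ^ (i+1) / (Nat.factorial (i+1) : ℝ)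
          * iteratedDeriv (i+1) g x := by
      rw [← Finset.Ico_add_one_right_eq_Icc, Finset.sum_Ico_eq_sum_range]
      simp [Nat.add_sub_cancel, add_comm]
    have e2 := Finset.sum_range_succ' (fun i => t ^ i / (Nat.factorial i : ℝ)
      * iteratedDeriv i g x) r
    have e3 := Finset.sum_range_succ (fun i => t ^ i / (Nat.factorial i : ℝ)
      * iteratedDeriv i g x) r
    rw [← hG] at e3
    simp only [pow_zero, Nat.factorial_zero, Nat.cast_one, iteratedDeriv_zero, one_div,
      inv_one, one_mul] at e2
    rw [e1]
    linarith [e2, e3]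
  have hsplit : ∫ s in (0:ℝ)..1,
      (t ^ r * (1 - s) ^ (r - 1) / (Nat.factorial (r-1) : ℝ)) * (G (x + s * t) - G x)
      = (∫ s in (0:ℝ)..1, (t ^ r * (1 - s) ^ (r - 1) / (Nat.factorial (r-1) : ℝ))
          * G (x + s * t))
        - (∫ s in (0:ℝ)..1, (t ^ r * (1 - s) ^ (r - 1) / (Nat.factorial (r-1) : ℝ)) * G x) := by
    rw [← intervalIntegral.integral_sub hDint ((show Continuous fun s : ℝ =>
      (t ^ r * (1 - s) ^ (r - 1) / (Nat.factorial (r-1) : ℝ)) * G x by fun_prop).intervalIntegrable 0 1)]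
    congr 1; funext s; ring
  have hcG : ∫ s in (0:ℝ)..1, (t ^ r * (1 - s) ^ (r - 1) / (Nat.factorial (r-1) : ℝ)) * G x
      = t ^ r / (Nat.factorial r : ℝ) * G x := by
    rw [show (fun s : ℝ => (t ^ r * (1 - s) ^ (r - 1) / (Nat.factorial (r-1) : ℝ)) * G x)
        = fun s : ℝ => ((t ^ r * G x) * (1 - s) ^ (r - 1) / (Nat.factorial (r-1) : ℝ)) from
        funext fun s => by ring]
    rw [int_pow_aux r hr (t ^ r * G x)]
    ring
  rw [hsplit, hFTC, h1val, h0val, hIcc, hcG]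
  ring
/-- `L^p` Taylor expansion of order `r`: if `g` is `r` times
differentiable with `r`-th derivative in `L^p`, then
`‖g(· + t) - g - Σ_{i=1}^r (tⁱ/i!) g_i‖_p ≤ (|t|^r/r!) w_{p,g_r}(|t|)`. -/
theorem lp_taylor_expansion_bound
    (p : ℝ≥0∞) (hp1 : 1 ≤ p) (hp : p ≠ ⊤) (r : ℕ) (hr : 1 ≤ r)
    (g : ℝ → ℝ) (hdiff : ∀ i < r, Differentiable ℝ (iteratedDeriv i g))
    (hgr : MemLp (iteratedDeriv r g) p (volume : Measure ℝ)) (t : ℝ) :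
    eLpNorm (fun x => g (x + t) - g x -
        ∑ i ∈ Finset.Icc 1 r, t ^ i / (Nat.factorial i : ℝ) * iteratedDeriv i g x)
        p volume ≤
      ENNReal.ofReal (|t| ^ r / (Nat.factorial r : ℝ)) *
        ⨆ s : {s : ℝ // |s| ≤ |t|},
          eLpNorm (fun x => iteratedDeriv r g (x - s.1) - iteratedDeriv r g x)
            p volume := by
  classical
  by_cases ht : t = 0
  · subst ht
    have hzero : (fun x => g (x + 0) - g x -
        ∑ i ∈ Finset.Icc 1 r, (0:ℝ) ^ i / (Nat.factorial i : ℝ) * iteratedDeriv i g x)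
        = fun _ => (0:ℝ) := by
      funext x
      rw [Finset.sum_eq_zero fun i hi => by
        rw [zero_pow (Nat.one_le_iff_ne_zero.1 (Finset.mem_Icc.1 hi).1)]
        simp]
      simp
    rw [hzero]
    rw [show (fun _ : ℝ => (0:ℝ)) = (0 : ℝ → ℝ) from rfl, eLpNorm_zero]
    exact zero_le
  have hp0 : p ≠ 0 := (lt_of_lt_of_le zero_lt_one hp1).ne'
  set P := p.toReal with hPdef
  have hP1 : (1:ℝ) ≤ P := by
    rw [hPdef, ← ENNReal.toReal_one]
    exact (ENNReal.toReal_le_toReal (by simp) hp).2 hp1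
  have hP0 : (0:ℝ) < P := lt_of_lt_of_le zero_lt_one hP1
  have hGm : Measurable (iteratedDeriv r g) := by
    obtain ⟨r', rfl⟩ : ∃ r', r = r' + 1 := ⟨r - 1, by omega⟩
    rw [iteratedDeriv_succ]
    exact measurable_deriv _
  set c : ℝ → ℝ := fun s => t ^ r * (1 - s) ^ (r - 1) / (Nat.factorial (r-1) : ℝ) with hc
  set w : ℝ → ℝ≥0∞ := fun s => (‖c s‖₊ : ℝ≥0∞) with hw
  set S := ⨆ s : {s : ℝ // |s| ≤ |t|},
    eLpNorm (fun x => iteratedDeriv r g (x - s.1) - iteratedDeriv r g x) p volume with hS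
  set C := ENNReal.ofReal (|t| ^ r / (Nat.factorial r : ℝ)) with hC
  have hcm : Continuous c := by fun_prop
  have hwm : Measurable w := hcm.measurable.enorm
  have hCne : C ≠ ⊤ := ENNReal.ofReal_ne_top
  -- total mass
  have hmass : ∫⁻ s in Set.Ioc (0:ℝ) 1, w s = C := by
    calc ∫⁻ s in Set.Ioc (0:ℝ) 1, w s
        = ∫⁻ s in Set.Ioc (0:ℝ) 1, ENNReal.ofReal |c s| :=
          lintegral_congr fun s => Real.enorm_eq_ofReal_abs (c s)
      _ = ENNReal.ofReal (∫ s in Set.Ioc (0:ℝ) 1, |c s|) := by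
          rw [ofReal_integral_eq_lintegral_ofReal
            ((hcm.abs.integrableOn_Icc).mono_set Set.Ioc_subset_Icc_self)
            (Filter.Eventually.of_forall fun s => abs_nonneg _)]
      _ = C := by
          rw [← intervalIntegral.integral_of_le zero_le_one,
            intervalIntegral.integral_congr (g := fun s =>
              |t| ^ r * (1 - s) ^ (r-1) / (Nat.factorial (r-1) : ℝ)) ?_,
            int_pow_aux r hr (|t| ^ r), hC]
          intro s hs
          rw [Set.uIcc_of_le zero_le_one] at hs
          simp only [hc, abs_div, abs_mul, abs_pow,
            abs_of_nonneg (show (0:ℝ) ≤ 1 - s by linarith [hs.2]),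
            abs_of_nonneg (show (0:ℝ) ≤ (Nat.factorial (r-1) : ℝ) by positivity),
            Nat.abs_cast]
  -- pointwise bound on the norm
  have hstep1 : ∀ x : ℝ, (‖g (x + t) - g x -
      ∑ i ∈ Finset.Icc 1 r, t ^ i / (Nat.factorial i : ℝ) * iteratedDeriv i g x‖₊ : ℝ≥0∞)
      ≤ ∫⁻ s in Set.Ioc (0:ℝ) 1,
          w s * (‖iteratedDeriv r g (x + s * t) - iteratedDeriv r g x‖₊ : ℝ≥0∞) := by
    intro x
    rw [taylor_aux r hr g hdiff (hgr.locallyIntegrable hp1) t ht x,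
      intervalIntegral.integral_of_le zero_le_one]
    refine le_trans (enorm_integral_le_lintegral_enorm _) (lintegral_mono fun s => ?_)
    exact (enorm_mul _ _).le
  -- Jensen pointwise
  have hstep2 : ∀ x : ℝ, (‖g (x + t) - g x -
      ∑ i ∈ Finset.Icc 1 r, t ^ i / (Nat.factorial i : ℝ) * iteratedDeriv i g x‖₊ : ℝ≥0∞) ^ P
      ≤ C ^ (P - 1) * ∫⁻ s in Set.Ioc (0:ℝ) 1,
          w s * (‖iteratedDeriv r g (x + s * t) - iteratedDeriv r g x‖₊ : ℝ≥0∞) ^ P := by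
    intro x
    refine le_trans (ENNReal.rpow_le_rpow (hstep1 x) hP0.le) ?_
    have hHm : Measurable fun s : ℝ =>
        (‖iteratedDeriv r g (x + s * t) - iteratedDeriv r g x‖₊ : ℝ≥0∞) :=
      ((hGm.comp (measurable_const.add (measurable_id.mul_const t))).sub
        measurable_const).enorm
    have := jensen_rpow_aux (ν := volume.restrict (Set.Ioc 0 1)) w
      (fun s => (‖iteratedDeriv r g (x + s * t) - iteratedDeriv r g x‖₊ : ℝ≥0∞))
      hwm.aemeasurable hHm.aemeasurable hP1
    rwa [hmass] at this
  rw [eLpNorm_eq_lintegral_rpow_enorm_toReal hp0 hp]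
  have hjoint : Measurable (Function.uncurry fun (x s : ℝ) =>
      w s * (‖iteratedDeriv r g (x + s * t) - iteratedDeriv r g x‖₊ : ℝ≥0∞) ^ P) := by
    apply Measurable.mul
    · exact hwm.comp measurable_snd
    · exact (((hGm.comp (measurable_fst.add (measurable_snd.mul_const t))).sub
        (hGm.comp measurable_fst)).enorm).pow_const _
  have main : ∫⁻ x, (‖g (x + t) - g x -
      ∑ i ∈ Finset.Icc 1 r, t ^ i / (Nat.factorial i : ℝ) * iteratedDeriv i g x‖₊ : ℝ≥0∞) ^ P
      ∂volume ≤ (C * S) ^ P := by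
    calc ∫⁻ x, (‖g (x + t) - g x -
        ∑ i ∈ Finset.Icc 1 r, t ^ i / (Nat.factorial i : ℝ) * iteratedDeriv i g x‖₊ : ℝ≥0∞) ^ P
        ∂volume
        ≤ ∫⁻ x, C ^ (P - 1) * ∫⁻ s in Set.Ioc (0:ℝ) 1,
            w s * (‖iteratedDeriv r g (x + s * t) - iteratedDeriv r g x‖₊ : ℝ≥0∞) ^ P
            ∂volume := lintegral_mono hstep2
      _ = C ^ (P - 1) * ∫⁻ x, ∫⁻ s in Set.Ioc (0:ℝ) 1,
            w s * (‖iteratedDeriv r g (x + s * t) - iteratedDeriv r g x‖₊ : ℝ≥0∞) ^ P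
            ∂volume :=
          lintegral_const_mul' _ _ (ENNReal.rpow_ne_top_of_nonneg (by linarith) hCne)
      _ = C ^ (P - 1) * ∫⁻ s in Set.Ioc (0:ℝ) 1, ∫⁻ x,
            w s * (‖iteratedDeriv r g (x + s * t) - iteratedDeriv r g x‖₊ : ℝ≥0∞) ^ P
            ∂volume := by rw [lintegral_lintegral_swap hjoint.aemeasurable]
      _ ≤ C ^ (P - 1) * ∫⁻ s in Set.Ioc (0:ℝ) 1, w s * S ^ P := by
          refine mul_le_mul_right (lintegral_mono_ae
            ((ae_restrict_iff' measurableSet_Ioc).2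
              (Filter.Eventually.of_forall fun s hs => ?_))) _
          rw [lintegral_const_mul' _ _ (by simp [hw] : w s ≠ ⊤)]
          refine mul_le_mul_right ?_ _
          have heq : ∫⁻ x, (‖iteratedDeriv r g (x + s * t) - iteratedDeriv r g x‖₊ : ℝ≥0∞) ^ P
              ∂volume = (eLpNorm (fun x => iteratedDeriv r g (x - (-(s * t)))
                - iteratedDeriv r g x) p volume) ^ P := by
            rw [eLpNorm_eq_lintegral_rpow_enorm_toReal hp0 hp, ← ENNReal.rpow_mul, one_div,
              inv_mul_cancel₀ hP0.ne', ENNReal.rpow_one]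
            exact lintegral_congr fun x => by rw [sub_neg_eq_add]; rfl
          rw [heq]
          refine ENNReal.rpow_le_rpow ?_ hP0.le
          refine le_iSup_of_le ⟨-(s * t), ?_⟩ le_rfl
          rw [abs_neg, abs_mul, abs_of_pos hs.1]
          calc s * |t| ≤ 1 * |t| := mul_le_mul_of_nonneg_right hs.2 (abs_nonneg t)
            _ = |t| := one_mul _
      _ = C ^ (P - 1) * (C * S ^ P) := by
          rw [lintegral_mul_const _ hwm, hmass]
      _ = (C * S) ^ P := by
          have hCP : C ^ (P - 1) * C = C ^ P := by
            nth_rewrite 2 [← ENNReal.rpow_one C]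
            rw [← ENNReal.rpow_add_of_nonneg (P - 1) 1 (by linarith) zero_le_one,
              sub_add_cancel]
          rw [ENNReal.mul_rpow_of_nonneg _ _ hP0.le, ← mul_assoc, hCP]
  calc (∫⁻ x, (‖g (x + t) - g x -
      ∑ i ∈ Finset.Icc 1 r, t ^ i / (Nat.factorial i : ℝ) * iteratedDeriv i g x‖₊ : ℝ≥0∞) ^ P
      ∂volume) ^ (1 / P)
      ≤ ((C * S) ^ P) ^ (1 / P) := ENNReal.rpow_le_rpow main (by positivity)
    _ = C * S := by
        rw [← ENNReal.rpow_mul, mul_one_div, div_self hP0.ne', ENNReal.rpow_one]
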